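/- arXiv:2511.06576 — 8 statements merged into one kernel-verified Lean document; each statement's English description precedes it below -/
import Mathlib

section
/- Let n, p, m ∈ ℕ with n ≥ 1, let A_c ∈ ℝ^{n×n}, B̂ ∈ ℝ^{n×p}, C ∈ ℝ^{m×n}, D ∈ ℝ^{m×p}, let P ∈ ℝ^{n×n} be symmetric, let β ≥ 0, λ ≥ 0, and let X ∈ ℝ^{(p+m)×(p+m)} be symmetric with quadratic supply rate s(u, y) = (u, y)ᵀ·X·(u, y). Suppose that for all x ∈ ℝⁿ, η ∈ ℝᵖ, g ∈ ℝⁿ the pointwise inequality 2·xᵀP(A_c x + B̂ η + g) ≤ s(η, Cx + Dη) − λ·(β²·xₙ² − ‖g‖²) holds. Then for every map g: ℝⁿ → ℝⁿ satisfying ‖g(x)‖ ≤ β·|xₙ| for all x, and every differentiable trajectory x: ℝ → ℝⁿ and input η: ℝ → ℝᵖ satisfying x'(t) = A_c x(t) + B̂ η(t) + g(x(t)) for all t, the storage function V(t) = x(t)ᵀ P x(t) is differentiable with V'(t) ≤ s(η(t), C x(t) + D η(t)) for all t. -/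
open Matrix

theorem sProcedure_dissipativity (n p m : ℕ) (hn : 0 < n)
    (Ac : Matrix (Fin n) (Fin n) ℝ) (Bh : Matrix (Fin n) (Fin p) ℝ)
    (C : Matrix (Fin m) (Fin n) ℝ) (D : Matrix (Fin m) (Fin p) ℝ)
    (P : Matrix (Fin n) (Fin n) ℝ) (hP : P.IsSymm)
    (β lam : ℝ) (hβ : 0 ≤ β) (hlam : 0 ≤ lam)
    (X : Matrix (Fin p ⊕ Fin m) (Fin p ⊕ Fin m) ℝ) (hX : X.IsSymm)
    (s : (Fin p → ℝ) → (Fin m → ℝ) → ℝ)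
    (hs : ∀ u y, s u y = Sum.elim u y ⬝ᵥ X *ᵥ Sum.elim u y)
    (hpt : ∀ (x : EuclideanSpace ℝ (Fin n)) (η : Fin p → ℝ) (g : EuclideanSpace ℝ (Fin n)),
      2 * ((fun i => x i) ⬝ᵥ P *ᵥ (Ac *ᵥ (fun i => x i) + Bh *ᵥ η + fun i => g i)) ≤
        s η (C *ᵥ (fun i => x i) + D *ᵥ η) -
          lam * (β ^ 2 * (x ⟨n - 1, Nat.sub_lt hn one_pos⟩) ^ 2 - ‖g‖ ^ 2)) :
    ∀ g : EuclideanSpace ℝ (Fin n) → EuclideanSpace ℝ (Fin n),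
      (∀ x, ‖g x‖ ≤ β * |x ⟨n - 1, Nat.sub_lt hn one_pos⟩|) →
      ∀ (x : ℝ → EuclideanSpace ℝ (Fin n)) (η : ℝ → Fin p → ℝ),
        (∀ t, HasDerivAt x
          ((WithLp.equiv 2 (Fin n → ℝ)).symm
            (Ac *ᵥ (fun i => x t i) + Bh *ᵥ η t + fun i => g (x t) i)) t) →
        ∀ t, ∃ v,
          HasDerivAt (fun τ => (fun i => x τ i) ⬝ᵥ P *ᵥ (fun i => x τ i)) v t ∧
          v ≤ s (η t) (C *ᵥ (fun i => x t i) + D *ᵥ η t) := by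
  intro g hg x η hx t
  set w : Fin n → ℝ := Ac *ᵥ (fun i => x t i) + Bh *ᵥ η t + fun i => g (x t) i with hw
  have hxi : ∀ i, HasDerivAt (fun τ => x τ i) (w i) t := by
    intro i
    have := (EuclideanSpace.proj i (𝕜 := ℝ)).hasFDerivAt.comp_hasDerivAt t (hx t)
    simpa [hw, Function.comp_def] using this
  have hProw : ∀ i, HasDerivAt (fun τ => ∑ j, P i j * x τ j) (∑ j, P i j * w j) t := by
    intro i
    exact HasDerivAt.fun_sum (fun j _ => (hxi j).const_mul (P i j))
  have hV : HasDerivAt (fun τ => (fun i => x τ i) ⬝ᵥ P *ᵥ (fun i => x τ i))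
      (∑ i, (w i * ∑ j, P i j * x t j + x t i * ∑ j, P i j * w j)) t := by
    have : HasDerivAt (fun τ => ∑ i, x τ i * ∑ j, P i j * x τ j)
        (∑ i, (w i * ∑ j, P i j * x t j + x t i * ∑ j, P i j * w j)) t :=
      HasDerivAt.fun_sum (fun i _ => (hxi i).mul (hProw i))
    simpa [dotProduct, Matrix.mulVec, dotProduct] using this
  refine ⟨_, hV, ?_⟩
  have hsym : (w ⬝ᵥ P *ᵥ fun i => x t i) = (fun i => x t i) ⬝ᵥ P *ᵥ w := by
    rw [Matrix.dotProduct_mulVec, ← Matrix.mulVec_transpose, hP.eq, dotProduct_comm]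
  have hv2 : (∑ i, (w i * ∑ j, P i j * x t j + x t i * ∑ j, P i j * w j))
      = 2 * ((fun i => x t i) ⬝ᵥ P *ᵥ w) := by
    rw [Finset.sum_add_distrib]
    have h1 : (∑ i, w i * ∑ j, P i j * x t j) = w ⬝ᵥ P *ᵥ fun i => x t i := rfl
    have h2 : (∑ i, x t i * ∑ j, P i j * w j) = (fun i => x t i) ⬝ᵥ P *ᵥ w := rfl
    rw [h1, h2, hsym]; ring
  rw [hv2]
  have hp := hpt (x t) (η t) (g (x t))
  refine le_trans hp ?_
  have hb : ‖g (x t)‖ ^ 2 ≤ β ^ 2 * (x t ⟨n - 1, Nat.sub_lt hn one_pos⟩) ^ 2 := by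
    have := hg (x t)
    calc ‖g (x t)‖ ^ 2 ≤ (β * |x t ⟨n - 1, Nat.sub_lt hn one_pos⟩|) ^ 2 := by
          apply pow_le_pow_left₀ (norm_nonneg _) this
      _ = β ^ 2 * (x t ⟨n - 1, Nat.sub_lt hn one_pos⟩) ^ 2 := by
          rw [mul_pow, sq_abs]
    
  have : 0 ≤ lam * (β ^ 2 * (x t ⟨n - 1, Nat.sub_lt hn one_pos⟩) ^ 2 - ‖g (x t)‖ ^ 2) :=
    mul_nonneg hlam (by linarith)
  linarith
end

section
/- Let R > 0, L > 0, ω₀ ∈ ℝ, and define Ā = [[−R/L, ω₀], [−ω₀, −R/L]] ∈ ℝ^{2×2} and B̄ = (1/L)·I₂. Then with P̄ = (L/2)·I₂, ρ̄ = R, and ν̄ = 0: P̄ is symmetric positive definite, P̄Ā + (P̄Ā)ᵀ = −R·I₂, −P̄B̄ + (1/2)·I₂ = 0, and the 4×4 block matrix [[−(P̄Ā + (P̄Ā)ᵀ) − ρ̄·I₂, −P̄B̄ + (1/2)·I₂], [(−P̄B̄ + (1/2)·I₂)ᵀ, −ν̄·I₂]] equals the zero matrix and is in particular positive semidefinite.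 -/
open Matrix

theorem line_passivity_feasibility (R L ω₀ : ℝ) (hR : 0 < R) (hL : 0 < L)
    (Abar : Matrix (Fin 2) (Fin 2) ℝ) (hA : Abar = !![-R / L, ω₀; -ω₀, -R / L])
    (Bbar : Matrix (Fin 2) (Fin 2) ℝ) (hB : Bbar = (1 / L) • (1 : Matrix (Fin 2) (Fin 2) ℝ))
    (Pbar : Matrix (Fin 2) (Fin 2) ℝ) (hP : Pbar = (L / 2) • (1 : Matrix (Fin 2) (Fin 2) ℝ))
    (ρbar νbar : ℝ) (hρ : ρbar = R) (hν : νbar = 0) :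
    Pbar.IsSymm ∧ Pbar.PosDef ∧
    Pbar * Abar + (Pbar * Abar)ᵀ = (-R) • (1 : Matrix (Fin 2) (Fin 2) ℝ) ∧
    -(Pbar * Bbar) + (1 / 2 : ℝ) • (1 : Matrix (Fin 2) (Fin 2) ℝ) = 0 ∧
    Matrix.fromBlocks
        (-(Pbar * Abar + (Pbar * Abar)ᵀ) - ρbar • (1 : Matrix (Fin 2) (Fin 2) ℝ))
        (-(Pbar * Bbar) + (1 / 2 : ℝ) • (1 : Matrix (Fin 2) (Fin 2) ℝ))
        (-(Pbar * Bbar) + (1 / 2 : ℝ) • (1 : Matrix (Fin 2) (Fin 2) ℝ))ᵀ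
        (-νbar • (1 : Matrix (Fin 2) (Fin 2) ℝ)) = 0 ∧
    (Matrix.fromBlocks
        (-(Pbar * Abar + (Pbar * Abar)ᵀ) - ρbar • (1 : Matrix (Fin 2) (Fin 2) ℝ))
        (-(Pbar * Bbar) + (1 / 2 : ℝ) • (1 : Matrix (Fin 2) (Fin 2) ℝ))
        (-(Pbar * Bbar) + (1 / 2 : ℝ) • (1 : Matrix (Fin 2) (Fin 2) ℝ))ᵀ
        (-νbar • (1 : Matrix (Fin 2) (Fin 2) ℝ))).PosSemidef := by
  subst hA hB hP hν
  subst hρ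
  have hL' : L ≠ 0 := ne_of_gt hL
  have hSym : ((L / 2) • (1 : Matrix (Fin 2) (Fin 2) ℝ)).IsSymm := by
    unfold Matrix.IsSymm
    ext i j
    fin_cases i <;> fin_cases j <;> simp [Matrix.one_apply]
  have hPA : ((L / 2) • (1 : Matrix (Fin 2) (Fin 2) ℝ)) * !![-ρbar / L, ω₀; -ω₀, -ρbar / L] +
      (((L / 2) • (1 : Matrix (Fin 2) (Fin 2) ℝ)) * !![-ρbar / L, ω₀; -ω₀, -ρbar / L])ᵀ
      = (-ρbar) • (1 : Matrix (Fin 2) (Fin 2) ℝ) := by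
    ext i j
    fin_cases i <;> fin_cases j <;>
      simp [Matrix.mul_apply, Fin.sum_univ_two, Matrix.one_apply, Matrix.transpose_apply, Matrix.vecHead, Matrix.vecTail] <;> field_simp <;> ring
  have hPB : -(((L / 2) • (1 : Matrix (Fin 2) (Fin 2) ℝ)) * ((1 / L) • (1 : Matrix (Fin 2) (Fin 2) ℝ)))
      + (1 / 2 : ℝ) • (1 : Matrix (Fin 2) (Fin 2) ℝ) = 0 := by
    ext i j
    fin_cases i <;> fin_cases j <;>
      simp [Matrix.mul_apply, Fin.sum_univ_two, Matrix.one_apply] <;> field_simp <;> ring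
  refine ⟨hSym, ?_, hPA, hPB, ?_, ?_⟩
  · have hd : ((L / 2) • (1 : Matrix (Fin 2) (Fin 2) ℝ)) = Matrix.diagonal (fun _ => L / 2) := by
      ext i j
      fin_cases i <;> fin_cases j <;> simp [Matrix.one_apply, Matrix.diagonal]
    rw [hd]
    exact Matrix.PosDef.diagonal (fun _ => by positivity)
  · rw [hPA, hPB]
    ext i j
    fin_cases i <;> fin_cases j <;>
      simp [Matrix.fromBlocks, Matrix.one_apply]
  · rw [hPA, hPB]
    have h0 : Matrix.fromBlocks
        (-((-ρbar) • (1 : Matrix (Fin 2) (Fin 2) ℝ)) - ρbar • (1 : Matrix (Fin 2) (Fin 2) ℝ))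
        (0 : Matrix (Fin 2) (Fin 2) ℝ) (0 : Matrix (Fin 2) (Fin 2) ℝ)ᵀ
        (-(0:ℝ) • (1 : Matrix (Fin 2) (Fin 2) ℝ)) = 0 := by
      ext i j
      fin_cases i <;> fin_cases j <;> simp [Matrix.fromBlocks, Matrix.one_apply]
    rw [h0]
    exact Matrix.PosSemidef.zero
end

section
/- Let R > 0, L > 0, ω₀ ∈ ℝ, and define Ā = [[−R/L, ω₀], [−ω₀, −R/L]] ∈ ℝ^{2×2} and B̄ = (1/L)·I₂. Suppose P̄ ∈ ℝ^{2×2} is symmetric positive definite and ρ̄ ∈ ℝ are such that the 4×4 block matrix [[−(P̄Ā + (P̄Ā)ᵀ) − ρ̄·I₂, −P̄B̄ + (1/2)·I₂], [(−P̄B̄ + (1/2)·I₂)ᵀ, 0]] (i.e., with ν̄ = 0) is positive semidefinite. Then necessarily P̄ = (L/2)·I₂ and ρ̄ ≤ R. Hence with ν̄ = 0 the output passivity index ρ̄ = R is maximal. -/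
open Matrix

theorem line_passivity_maximality (R L ω₀ : ℝ) (hR : 0 < R) (hL : 0 < L)
    (Abar : Matrix (Fin 2) (Fin 2) ℝ) (hA : Abar = !![-R / L, ω₀; -ω₀, -R / L])
    (Bbar : Matrix (Fin 2) (Fin 2) ℝ) (hB : Bbar = (1 / L) • (1 : Matrix (Fin 2) (Fin 2) ℝ))
    (Pbar : Matrix (Fin 2) (Fin 2) ℝ) (hPsymm : Pbar.IsSymm) (hPpos : Pbar.PosDef)
    (ρbar : ℝ)
    (hLMI : (Matrix.fromBlocks
        (-(Pbar * Abar + (Pbar * Abar)ᵀ) - ρbar • (1 : Matrix (Fin 2) (Fin 2) ℝ))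
        (-(Pbar * Bbar) + (1 / 2 : ℝ) • (1 : Matrix (Fin 2) (Fin 2) ℝ))
        (-(Pbar * Bbar) + (1 / 2 : ℝ) • (1 : Matrix (Fin 2) (Fin 2) ℝ))ᵀ
        (0 : Matrix (Fin 2) (Fin 2) ℝ)).PosSemidef) :
    Pbar = (L / 2) • (1 : Matrix (Fin 2) (Fin 2) ℝ) ∧ ρbar ≤ R := by
  set C : Matrix (Fin 2) (Fin 2) ℝ :=
    -(Pbar * Bbar) + (1 / 2 : ℝ) • (1 : Matrix (Fin 2) (Fin 2) ℝ) with hCdef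
  -- columns of the second block are zero
  have hCzero : C = 0 := by
    ext i j
    have hx := (hLMI.dotProduct_mulVec_zero_iff
      (Sum.elim (0 : Fin 2 → ℝ) (Pi.single j 1))).mp ?_
    · have := congrFun hx (Sum.inl i)
      simpa [fromBlocks_mulVec, mulVec_single] using this
    · simp [dotProduct, fromBlocks_mulVec, Fintype.sum_sum_type]
  have hPB : Pbar * Bbar = (1 / 2 : ℝ) • (1 : Matrix (Fin 2) (Fin 2) ℝ) := by
    have := hCzero
    rw [hCdef] at this
    linear_combination (norm := module) -this
  have hP : Pbar = (L / 2) • (1 : Matrix (Fin 2) (Fin 2) ℝ) := by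
    rw [hB, Matrix.mul_smul, Matrix.mul_one] at hPB
    have : L • ((1 / L) • Pbar) = L • ((1 / 2 : ℝ) • (1 : Matrix (Fin 2) (Fin 2) ℝ)) := by
      rw [hPB]
    rw [smul_smul, smul_smul, mul_one_div, div_self hL.ne', one_smul] at this
    rw [this]; congr 1; ring
  refine ⟨hP, ?_⟩
  have hq := hLMI.dotProduct_mulVec_nonneg (Sum.elim (Pi.single 0 1) (0 : Fin 2 → ℝ))
  rw [hP, hA] at hq
  simp [dotProduct, fromBlocks_mulVec, Fintype.sum_sum_type, mulVec,
    Matrix.mul_apply, Fin.sum_univ_succ, Matrix.one_apply, Matrix.transpose_apply,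
    Matrix.smul_apply, Matrix.vecHead, Matrix.vecTail] at hq
  have hL' : L ≠ 0 := hL.ne'
  have h1 : L / 2 * (-R / L) = -(R / 2) := by field_simp
  rw [h1] at hq
  linarith
end

section
/- Let R > 0, L > 0, ω₀ ∈ ℝ, and define Ā = [[−R/L, ω₀], [−ω₀, −R/L]] ∈ ℝ^{2×2}. Then for every differentiable trajectory x: ℝ → ℝ² and input u: ℝ → ℝ² satisfying x'(t) = Ā x(t) + (1/L)·u(t) for all t, the storage function V(t) = (L/2)·‖x(t)‖² is differentiable and satisfies the exact dissipation identity V'(t) = ⟨u(t), x(t)⟩ − R·‖x(t)‖² for all t; in particular V'(t) ≤ ⟨u(t), x(t)⟩ − R·‖x(t)‖², so the line subsystem with output y = x is strictly output passive with output passivity index R. -/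
open Matrix RealInnerProductSpace

theorem line_trajectory_dissipativity (R L ω₀ : ℝ) (hR : 0 < R) (hL : 0 < L)
    (Abar : Matrix (Fin 2) (Fin 2) ℝ) (hA : Abar = !![-R / L, ω₀; -ω₀, -R / L])
    (x u : ℝ → EuclideanSpace ℝ (Fin 2))
    (hdyn : ∀ t, HasDerivAt x
      ((WithLp.equiv 2 (Fin 2 → ℝ)).symm (Abar *ᵥ fun i => x t i) + (1 / L) • u t) t) :
    ∀ t, HasDerivAt (fun τ => (L / 2) * ‖x τ‖ ^ 2)
      (⟪u t, x t⟫ - R * ‖x t‖ ^ 2) t ∧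
      ⟪u t, x t⟫ - R * ‖x t‖ ^ 2 ≤ ⟪u t, x t⟫ - R * ‖x t‖ ^ 2 := by
  intro t
  refine ⟨?_, le_refl _⟩
  have hx := hdyn t
  have h1 : HasDerivAt (fun τ => ⟪x τ, x τ⟫)
      (⟪x t, (WithLp.equiv 2 (Fin 2 → ℝ)).symm (Abar *ᵥ fun i => x t i) + (1 / L) • u t⟫
       + ⟪(WithLp.equiv 2 (Fin 2 → ℝ)).symm (Abar *ᵥ fun i => x t i) + (1 / L) • u t, x t⟫) t :=
    hx.inner ℝ hx
  have h2 := h1.const_mul (L / 2)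
  have key : (L / 2) * (⟪x t, (WithLp.equiv 2 (Fin 2 → ℝ)).symm (Abar *ᵥ fun i => x t i) + (1 / L) • u t⟫
       + ⟪(WithLp.equiv 2 (Fin 2 → ℝ)).symm (Abar *ᵥ fun i => x t i) + (1 / L) • u t, x t⟫)
      = ⟪u t, x t⟫ - R * ‖x t‖ ^ 2 := by
    subst hA
    simp only [PiLp.inner_apply, RCLike.inner_apply, conj_trivial, Fin.sum_univ_two,
      PiLp.add_apply, PiLp.smul_apply, smul_eq_mul, WithLp.equiv_symm_apply, PiLp.toLp_apply,
      mulVec, dotProduct, Fin.sum_univ_two, Matrix.cons_val', Matrix.cons_val_zero,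
      Matrix.cons_val_one, Matrix.head_cons, Matrix.empty_val', Matrix.cons_val_fin_one,
      Matrix.head_fin_const, Matrix.of_apply, EuclideanSpace.norm_eq, Real.norm_eq_abs, sq_abs]
    rw [Real.sq_sqrt (by positivity)]
    field_simp
    ring
  have := key ▸ h2
  have hf : (fun τ => (L / 2) * ‖x τ‖ ^ 2) = fun y => L / 2 * ⟪x y, x y⟫ := by
    funext τ
    rw [← real_inner_self_eq_norm_sq]
  rw [hf]
  exact this
end

section
/- Let Y_L > 0, C > 0, ω₀ ∈ ℝ, and define Ǎ = [[−Y_L/C, ω₀], [−ω₀, −Y_L/C]] ∈ ℝ^{2×2} and B̌ = (1/C)·I₂ (the load input being the negated net injected current). Then with P̌ = (C/2)·I₂, ρ̌ = Y_L, and ν̌ = 0: P̌ is symmetric positive definite, P̌Ǎ + (P̌Ǎ)ᵀ = −Y_L·I₂, −P̌B̌ + (1/2)·I₂ = 0, and the 4×4 block matrix [[−(P̌Ǎ + (P̌Ǎ)ᵀ) − ρ̌·I₂, −P̌B̌ + (1/2)·I₂], [(−P̌B̌ + (1/2)·I₂)ᵀ, −ν̌·I₂]] equals the zero matrix and is in particular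 positive semidefinite. -/
open Matrix

theorem load_passivity_feasibility (YL C ω₀ : ℝ) (hYL : 0 < YL) (hC : 0 < C)
    (Acheck : Matrix (Fin 2) (Fin 2) ℝ) (hA : Acheck = !![-YL / C, ω₀; -ω₀, -YL / C])
    (Bcheck : Matrix (Fin 2) (Fin 2) ℝ) (hB : Bcheck = (1 / C) • (1 : Matrix (Fin 2) (Fin 2) ℝ))
    (Pcheck : Matrix (Fin 2) (Fin 2) ℝ) (hP : Pcheck = (C / 2) • (1 : Matrix (Fin 2) (Fin 2) ℝ))
    (ρcheck νcheck : ℝ) (hρ : ρcheck = YL) (hν : νcheck = 0) :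
    Pcheck.IsSymm ∧ Pcheck.PosDef ∧
    Pcheck * Acheck + (Pcheck * Acheck)ᵀ = (-YL) • (1 : Matrix (Fin 2) (Fin 2) ℝ) ∧
    -(Pcheck * Bcheck) + (1 / 2 : ℝ) • (1 : Matrix (Fin 2) (Fin 2) ℝ) = 0 ∧
    Matrix.fromBlocks
        (-(Pcheck * Acheck + (Pcheck * Acheck)ᵀ) - ρcheck • (1 : Matrix (Fin 2) (Fin 2) ℝ))
        (-(Pcheck * Bcheck) + (1 / 2 : ℝ) • (1 : Matrix (Fin 2) (Fin 2) ℝ))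
        (-(Pcheck * Bcheck) + (1 / 2 : ℝ) • (1 : Matrix (Fin 2) (Fin 2) ℝ))ᵀ
        (-νcheck • (1 : Matrix (Fin 2) (Fin 2) ℝ)) = 0 ∧
    (Matrix.fromBlocks
        (-(Pcheck * Acheck + (Pcheck * Acheck)ᵀ) - ρcheck • (1 : Matrix (Fin 2) (Fin 2) ℝ))
        (-(Pcheck * Bcheck) + (1 / 2 : ℝ) • (1 : Matrix (Fin 2) (Fin 2) ℝ))
        (-(Pcheck * Bcheck) + (1 / 2 : ℝ) • (1 : Matrix (Fin 2) (Fin 2) ℝ))ᵀ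
        (-νcheck • (1 : Matrix (Fin 2) (Fin 2) ℝ))).PosSemidef := by
  subst hA hB hP hν
  rw [hρ] at *
  have hC' : C ≠ 0 := hC.ne'
  have hsymm : ((C / 2) • (1 : Matrix (Fin 2) (Fin 2) ℝ)).IsSymm := by
    ext i j
    fin_cases i <;> fin_cases j <;> simp [Matrix.IsSymm, Matrix.transpose_apply, Matrix.one_apply]
  have hdiag : (C / 2) • (1 : Matrix (Fin 2) (Fin 2) ℝ)
      = Matrix.diagonal (fun _ => C / 2) := by
    ext i j
    by_cases h : i = j <;> simp [Matrix.diagonal, Matrix.one_apply, h]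
  have hpd : ((C / 2) • (1 : Matrix (Fin 2) (Fin 2) ℝ)).PosDef := by
    rw [hdiag]
    exact Matrix.posDef_diagonal_iff.mpr (fun _ => by positivity)
  have h3 : (C / 2) • (1 : Matrix (Fin 2) (Fin 2) ℝ) * !![-YL / C, ω₀; -ω₀, -YL / C] +
      ((C / 2) • (1 : Matrix (Fin 2) (Fin 2) ℝ) * !![-YL / C, ω₀; -ω₀, -YL / C])ᵀ
      = (-YL) • (1 : Matrix (Fin 2) (Fin 2) ℝ) := by
    rw [Matrix.smul_mul, Matrix.one_mul]
    ext i j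
    fin_cases i <;> fin_cases j <;>
      simp only [Matrix.add_apply, Matrix.transpose_apply, Matrix.smul_apply, smul_eq_mul,
        Matrix.one_apply, Matrix.cons_val', Matrix.cons_val_zero, Matrix.cons_val_one,
        Matrix.head_cons, Matrix.empty_val', Matrix.cons_val_fin_one, Matrix.head_fin_const,
        Matrix.of_apply, neg_smul, Matrix.neg_apply] <;>
      norm_num <;> field_simp <;> ring
  have h4 : -((C / 2) • (1 : Matrix (Fin 2) (Fin 2) ℝ) * ((1 / C) • (1 : Matrix (Fin 2) (Fin 2) ℝ)))
      + (1 / 2 : ℝ) • (1 : Matrix (Fin 2) (Fin 2) ℝ) = 0 := by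
    have hc : C / 2 * (1 / C) = 1 / 2 := by
      field_simp
    rw [Matrix.smul_mul, Matrix.one_mul, smul_smul, hc, neg_add_cancel]
  have hblk : Matrix.fromBlocks
        (-((C / 2) • (1 : Matrix (Fin 2) (Fin 2) ℝ) * !![-YL / C, ω₀; -ω₀, -YL / C] +
           ((C / 2) • (1 : Matrix (Fin 2) (Fin 2) ℝ) * !![-YL / C, ω₀; -ω₀, -YL / C])ᵀ)
          - YL • (1 : Matrix (Fin 2) (Fin 2) ℝ))
        (-((C / 2) • (1 : Matrix (Fin 2) (Fin 2) ℝ) * ((1 / C) • (1 : Matrix (Fin 2) (Fin 2) ℝ)))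
          + (1 / 2 : ℝ) • (1 : Matrix (Fin 2) (Fin 2) ℝ))
        (-((C / 2) • (1 : Matrix (Fin 2) (Fin 2) ℝ) * ((1 / C) • (1 : Matrix (Fin 2) (Fin 2) ℝ)))
          + (1 / 2 : ℝ) • (1 : Matrix (Fin 2) (Fin 2) ℝ))ᵀ
        (-(0:ℝ) • (1 : Matrix (Fin 2) (Fin 2) ℝ)) = 0 := by
    rw [h3, h4]
    ext i j
    fin_cases i <;> fin_cases j <;>
      simp [Matrix.fromBlocks, Matrix.one_fin_two]
  refine ⟨hsymm, hpd, h3, h4, hblk, ?_⟩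
  rw [hblk]
  exact Matrix.PosSemidef.zero
end

section
/- Let Y_L > 0, C > 0, ω₀ ∈ ℝ, and define Ǎ = [[−Y_L/C, ω₀], [−ω₀, −Y_L/C]] ∈ ℝ^{2×2} and B̌ = (1/C)·I₂. Suppose P̌ ∈ ℝ^{2×2} is symmetric positive definite and ρ̌ ∈ ℝ are such that the 4×4 block matrix [[−(P̌Ǎ + (P̌Ǎ)ᵀ) − ρ̌·I₂, −P̌B̌ + (1/2)·I₂], [(−P̌B̌ + (1/2)·I₂)ᵀ, 0]] (i.e., with ν̌ = 0) is positive semidefinite. Then necessarily P̌ = (C/2)·I₂ and ρ̌ ≤ Y_L. Hence with ν̌ = 0 the output passivity index ρ̌ = Y_L is maximal. -/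
open Matrix

lemma aux_lin_zero {a d : ℝ} (h : ∀ t : ℝ, 0 ≤ a + t * d) : d = 0 := by
  by_contra hd
  have h1 := h (-(a + 1) / d)
  rw [div_mul_cancel₀ _ hd] at h1
  linarith

theorem load_passivity_maximality (YL C ω₀ : ℝ) (hYL : 0 < YL) (hC : 0 < C)
    (Acheck : Matrix (Fin 2) (Fin 2) ℝ) (hA : Acheck = !![-YL / C, ω₀; -ω₀, -YL / C])
    (Bcheck : Matrix (Fin 2) (Fin 2) ℝ) (hB : Bcheck = (1 / C) • (1 : Matrix (Fin 2) (Fin 2) ℝ))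
    (Pcheck : Matrix (Fin 2) (Fin 2) ℝ) (hPsymm : Pcheck.IsSymm) (hPpos : Pcheck.PosDef)
    (ρcheck : ℝ)
    (hLMI : (Matrix.fromBlocks
        (-(Pcheck * Acheck + (Pcheck * Acheck)ᵀ) - ρcheck • (1 : Matrix (Fin 2) (Fin 2) ℝ))
        (-(Pcheck * Bcheck) + (1 / 2 : ℝ) • (1 : Matrix (Fin 2) (Fin 2) ℝ))
        (-(Pcheck * Bcheck) + (1 / 2 : ℝ) • (1 : Matrix (Fin 2) (Fin 2) ℝ))ᵀ
        (0 : Matrix (Fin 2) (Fin 2) ℝ)).PosSemidef) :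
    Pcheck = (C / 2) • (1 : Matrix (Fin 2) (Fin 2) ℝ) ∧ ρcheck ≤ YL := by
  subst hA hB
  have hCne : C ≠ 0 := ne_of_gt hC
  have hAT : (!![-YL / C, ω₀; -ω₀, -YL / C])ᵀ = !![-YL / C, -ω₀; ω₀, -YL / C] := by
    ext i j; fin_cases i <;> fin_cases j <;> rfl
  have k00 : ∀ t : ℝ, 0 ≤ (2*Pcheck 0 0*YL/C + 2*Pcheck 0 1*ω₀ - ρcheck) + t * (2*(-(Pcheck 0 0)/C + 1/2)) := by
    intro t
    have h := hLMI.dotProduct_mulVec_nonneg (Sum.elim ![1,0] ![t,0])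
    simp only [hAT, dotProduct, Pi.star_apply, Matrix.mulVec, Fintype.sum_sum_type, Fin.sum_univ_two,
      Sum.elim_inl, Sum.elim_inr, Matrix.fromBlocks_apply₁₁, Matrix.fromBlocks_apply₁₂,
      Matrix.fromBlocks_apply₂₁, Matrix.fromBlocks_apply₂₂, Matrix.sub_apply, Matrix.add_apply,
      Matrix.neg_apply, Matrix.smul_apply, Matrix.transpose_apply, Matrix.one_apply,
      Matrix.mul_apply, Matrix.zero_apply, star_trivial, smul_eq_mul,
      Matrix.cons_val_zero, Matrix.cons_val_one, Matrix.head_cons, Matrix.head_fin_const,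
      Matrix.cons_val', Matrix.empty_val', Matrix.cons_val_fin_one, Matrix.of_apply] at h
    norm_num at h
    ring_nf at h ⊢
    linarith
  have k01 : ∀ t : ℝ, 0 ≤ (2*Pcheck 0 0*YL/C + 2*Pcheck 0 1*ω₀ - ρcheck) + t * (2*(-(Pcheck 0 1)/C)) := by
    intro t
    have h := hLMI.dotProduct_mulVec_nonneg (Sum.elim ![1,0] ![0,t])
    simp only [hAT, dotProduct, Pi.star_apply, Matrix.mulVec, Fintype.sum_sum_type, Fin.sum_univ_two,
      Sum.elim_inl, Sum.elim_inr, Matrix.fromBlocks_apply₁₁, Matrix.fromBlocks_apply₁₂,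
      Matrix.fromBlocks_apply₂₁, Matrix.fromBlocks_apply₂₂, Matrix.sub_apply, Matrix.add_apply,
      Matrix.neg_apply, Matrix.smul_apply, Matrix.transpose_apply, Matrix.one_apply,
      Matrix.mul_apply, Matrix.zero_apply, star_trivial, smul_eq_mul,
      Matrix.cons_val_zero, Matrix.cons_val_one, Matrix.head_cons, Matrix.head_fin_const,
      Matrix.cons_val', Matrix.empty_val', Matrix.cons_val_fin_one, Matrix.of_apply] at h
    norm_num at h
    ring_nf at h ⊢
    linarith
  have k10 : ∀ t : ℝ, 0 ≤ (-2*Pcheck 1 0*ω₀ + 2*Pcheck 1 1*YL/C - ρcheck) + t * (2*(-(Pcheck 1 0)/C)) := by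
    intro t
    have h := hLMI.dotProduct_mulVec_nonneg (Sum.elim ![0,1] ![t,0])
    simp only [hAT, dotProduct, Pi.star_apply, Matrix.mulVec, Fintype.sum_sum_type, Fin.sum_univ_two,
      Sum.elim_inl, Sum.elim_inr, Matrix.fromBlocks_apply₁₁, Matrix.fromBlocks_apply₁₂,
      Matrix.fromBlocks_apply₂₁, Matrix.fromBlocks_apply₂₂, Matrix.sub_apply, Matrix.add_apply,
      Matrix.neg_apply, Matrix.smul_apply, Matrix.transpose_apply, Matrix.one_apply,
      Matrix.mul_apply, Matrix.zero_apply, star_trivial, smul_eq_mul,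
      Matrix.cons_val_zero, Matrix.cons_val_one, Matrix.head_cons, Matrix.head_fin_const,
      Matrix.cons_val', Matrix.empty_val', Matrix.cons_val_fin_one, Matrix.of_apply] at h
    norm_num at h
    ring_nf at h ⊢
    linarith
  have k11 : ∀ t : ℝ, 0 ≤ (-2*Pcheck 1 0*ω₀ + 2*Pcheck 1 1*YL/C - ρcheck) + t * (2*(-(Pcheck 1 1)/C + 1/2)) := by
    intro t
    have h := hLMI.dotProduct_mulVec_nonneg (Sum.elim ![0,1] ![0,t])
    simp only [hAT, dotProduct, Pi.star_apply, Matrix.mulVec, Fintype.sum_sum_type, Fin.sum_univ_two,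
      Sum.elim_inl, Sum.elim_inr, Matrix.fromBlocks_apply₁₁, Matrix.fromBlocks_apply₁₂,
      Matrix.fromBlocks_apply₂₁, Matrix.fromBlocks_apply₂₂, Matrix.sub_apply, Matrix.add_apply,
      Matrix.neg_apply, Matrix.smul_apply, Matrix.transpose_apply, Matrix.one_apply,
      Matrix.mul_apply, Matrix.zero_apply, star_trivial, smul_eq_mul,
      Matrix.cons_val_zero, Matrix.cons_val_one, Matrix.head_cons, Matrix.head_fin_const,
      Matrix.cons_val', Matrix.empty_val', Matrix.cons_val_fin_one, Matrix.of_apply] at h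
    norm_num at h
    ring_nf at h ⊢
    linarith
  have e00 : Pcheck 0 0 = C / 2 := by
    have := aux_lin_zero k00; field_simp at this; linarith
  have e01 : Pcheck 0 1 = 0 := by
    have := aux_lin_zero k01; field_simp at this; linarith
  have e10 : Pcheck 1 0 = 0 := by
    have := aux_lin_zero k10; field_simp at this; linarith
  have e11 : Pcheck 1 1 = C / 2 := by
    have := aux_lin_zero k11; field_simp at this; linarith
  constructor
  · ext i j
    fin_cases i <;> fin_cases j <;>
      simp [e00, e01, e10, e11, Matrix.one_apply]
  · have h0 := k00 0
    rw [e00, e01] at h0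
    have : 2 * (C/2) * YL / C = YL := by field_simp
    rw [this] at h0
    linarith
end

section
/- Let Y_L > 0, C > 0, ω₀ ∈ ℝ, and define Ǎ = [[−Y_L/C, ω₀], [−ω₀, −Y_L/C]] ∈ ℝ^{2×2}. Then for every differentiable trajectory x: ℝ → ℝ² and input u: ℝ → ℝ² satisfying x'(t) = Ǎ x(t) + (1/C)·u(t) for all t, the storage function V(t) = (C/2)·‖x(t)‖² is differentiable and satisfies the exact dissipation identity V'(t) = ⟨u(t), x(t)⟩ − Y_L·‖x(t)‖² for all t; in particular V'(t) ≤ ⟨u(t), x(t)⟩ − Y_L·‖x(t)‖², so the load subsystem with output y = x is strictly output passive with output passivity index Y_L. -/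
open Matrix RealInnerProductSpace

theorem load_trajectory_dissipativity (YL C ω₀ : ℝ) (hYL : 0 < YL) (hC : 0 < C)
    (Acheck : Matrix (Fin 2) (Fin 2) ℝ) (hA : Acheck = !![-YL / C, ω₀; -ω₀, -YL / C])
    (x u : ℝ → EuclideanSpace ℝ (Fin 2))
    (hdyn : ∀ t, HasDerivAt x
      ((WithLp.equiv 2 (Fin 2 → ℝ)).symm (Acheck *ᵥ fun i => x t i) + (1 / C) • u t) t) :
    ∀ t, HasDerivAt (fun τ => (C / 2) * ‖x τ‖ ^ 2)
      (⟪u t, x t⟫ - YL * ‖x t‖ ^ 2) t ∧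
      ⟪u t, x t⟫ - YL * ‖x t‖ ^ 2 ≤ ⟪u t, x t⟫ - YL * ‖x t‖ ^ 2 := by
  intro t
  refine ⟨?_, le_refl _⟩
  have hx := hdyn t
  have hD := (hx.inner ℝ hx).const_mul (C / 2)
  have heq : (fun τ => (C / 2) * ⟪x τ, x τ⟫) = fun τ => (C / 2) * ‖x τ‖ ^ 2 := by
    funext τ; rw [real_inner_self_eq_norm_sq]
  rw [heq] at hD
  refine hD.congr_deriv ?_
  rw [← real_inner_self_eq_norm_sq]
  simp only [hA, inner_add_left, inner_add_right, inner_smul_left, inner_smul_right]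
  have hC' : C ≠ 0 := ne_of_gt hC
  simp only [EuclideanSpace.inner_eq_star_dotProduct]
  simp [Matrix.mulVec, dotProduct, Fin.sum_univ_two, Matrix.cons_val_zero,
    Matrix.cons_val_one, Matrix.head_cons, WithLp.equiv_symm_apply, PiLp.toLp_apply]
  field_simp
  ring
end

section
/- Let A ∈ ℝ^{n×n}, B ∈ ℝ^{n×q}, C ∈ ℝ^{m×n}, D ∈ ℝ^{m×q}, let P ∈ ℝ^{n×n} be symmetric, and let X ∈ ℝ^{(q+m)×(q+m)} be symmetric with blocks X = [[X¹¹, X¹²], [X²¹, X²²]] (X²¹ = (X¹²)ᵀ) and quadratic supply rate s(u, y) = (u, y)ᵀ·X·(u, y). Then the block matrix M := [[−(PA + AᵀP) + CᵀX²²C, −PB + CᵀX²¹ + CᵀX²²D], [(−PB + CᵀX²¹ + CᵀX²²D)ᵀ, X¹¹ + X¹²D + (X¹²D)ᵀ + DᵀX²²D]] is positive semidefinite if and only if for all x ∈ ℝⁿ and u ∈ ℝ^q the pointwise dissipation inequality 2·xᵀP(Ax + Bu) ≤ s(u, Cx + Du) holds. -/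
open Matrix

lemma dp_transpose {k l : Type*} [Fintype k] [Fintype l]
    (M : Matrix l k ℝ) (v : k → ℝ) (w : l → ℝ) :
    v ⬝ᵥ Mᵀ *ᵥ w = w ⬝ᵥ M *ᵥ v := by
  rw [dotProduct_mulVec, vecMul_transpose, dotProduct_comm]

lemma lmi_key (n q m : ℕ)
    (A : Matrix (Fin n) (Fin n) ℝ) (B : Matrix (Fin n) (Fin q) ℝ)
    (C : Matrix (Fin m) (Fin n) ℝ) (D : Matrix (Fin m) (Fin q) ℝ)
    (P : Matrix (Fin n) (Fin n) ℝ) (hP : P.IsSymm)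
    (X12 : Matrix (Fin q) (Fin m) ℝ)
    (X11 : Matrix (Fin q) (Fin q) ℝ)
    (X22 : Matrix (Fin m) (Fin m) ℝ) (hX22 : X22.IsSymm)
    (x : Fin n → ℝ) (u : Fin q → ℝ) :
    Sum.elim x u ⬝ᵥ (Matrix.fromBlocks
      (-(P * A + Aᵀ * P) + Cᵀ * X22 * C)
      (-(P * B) + Cᵀ * X12ᵀ + Cᵀ * X22 * D)
      (-(P * B) + Cᵀ * X12ᵀ + Cᵀ * X22 * D)ᵀ
      (X11 + X12 * D + (X12 * D)ᵀ + Dᵀ * X22 * D)) *ᵥ Sum.elim x u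
    = Sum.elim u (C *ᵥ x + D *ᵥ u) ⬝ᵥ (Matrix.fromBlocks X11 X12 X12ᵀ X22) *ᵥ
        Sum.elim u (C *ᵥ x + D *ᵥ u)
      - 2 * (x ⬝ᵥ P *ᵥ (A *ᵥ x + B *ᵥ u)) := by
  have hP' : Pᵀ = P := hP
  have hX22' : X22ᵀ = X22 := hX22
  have hPs : ∀ (v w : Fin n → ℝ), v ⬝ᵥ P *ᵥ w = P *ᵥ v ⬝ᵥ w := fun v w => by
    rw [dotProduct_mulVec, ← vecMul_transpose, hP']
  have hX22s : ∀ (v w : Fin m → ℝ), v ⬝ᵥ X22 *ᵥ w = X22 *ᵥ v ⬝ᵥ w := fun v w => by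
    rw [dotProduct_mulVec, ← vecMul_transpose, hX22']
  simp only [fromBlocks_mulVec, sumElim_dotProduct_sumElim, Sum.elim_comp_inl,
    Sum.elim_comp_inr, add_mulVec, neg_mulVec, mulVec_add, dotProduct_add, dotProduct_neg,
    transpose_add, transpose_neg, transpose_mul, transpose_transpose, hP', hX22',
    ← mulVec_mulVec, dp_transpose, hPs, hX22s]
  simp only [dotProduct_comm]
  simp only [dotProduct_add, dp_transpose, hPs, hX22s]
  ring

theorem lmi_iff_pointwise_dissipation (n q m : ℕ)
    (A : Matrix (Fin n) (Fin n) ℝ) (B : Matrix (Fin n) (Fin q) ℝ)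
    (C : Matrix (Fin m) (Fin n) ℝ) (D : Matrix (Fin m) (Fin q) ℝ)
    (P : Matrix (Fin n) (Fin n) ℝ) (hP : P.IsSymm)
    (X11 : Matrix (Fin q) (Fin q) ℝ) (X12 : Matrix (Fin q) (Fin m) ℝ)
    (X22 : Matrix (Fin m) (Fin m) ℝ) (hX11 : X11.IsSymm) (hX22 : X22.IsSymm)
    (X : Matrix (Fin q ⊕ Fin m) (Fin q ⊕ Fin m) ℝ)
    (hX : X = Matrix.fromBlocks X11 X12 X12ᵀ X22)
    (s : (Fin q → ℝ) → (Fin m → ℝ) → ℝ)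
    (hs : ∀ u y, s u y = Sum.elim u y ⬝ᵥ X *ᵥ Sum.elim u y)
    (M : Matrix (Fin n ⊕ Fin q) (Fin n ⊕ Fin q) ℝ)
    (hM : M = Matrix.fromBlocks
      (-(P * A + Aᵀ * P) + Cᵀ * X22 * C)
      (-(P * B) + Cᵀ * X12ᵀ + Cᵀ * X22 * D)
      (-(P * B) + Cᵀ * X12ᵀ + Cᵀ * X22 * D)ᵀ
      (X11 + X12 * D + (X12 * D)ᵀ + Dᵀ * X22 * D)) :
    M.PosSemidef ↔
      ∀ (x : Fin n → ℝ) (u : Fin q → ℝ),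
        2 * (x ⬝ᵥ P *ᵥ (A *ᵥ x + B *ᵥ u)) ≤ s u (C *ᵥ x + D *ᵥ u) := by
  have key : ∀ (x : Fin n → ℝ) (u : Fin q → ℝ),
      Sum.elim x u ⬝ᵥ M *ᵥ Sum.elim x u
        = s u (C *ᵥ x + D *ᵥ u) - 2 * (x ⬝ᵥ P *ᵥ (A *ᵥ x + B *ᵥ u)) := by
    intro x u
    rw [hM, hs, hX]
    exact lmi_key n q m A B C D P hP X12 X11 X22 hX22 x u
  constructor
  · intro hpsd x u
    have h0 := hpsd.dotProduct_mulVec_nonneg (Sum.elim x u)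
    rw [show star (Sum.elim x u) = Sum.elim x u from star_trivial _] at h0
    rw [key x u] at h0
    linarith
  · intro h
    rw [posSemidef_iff_dotProduct_mulVec]
    constructor
    · -- Hermitian
      have hP' : Pᵀ = P := hP
      have hX11' : X11ᵀ = X11 := hX11
      have hX22' : X22ᵀ = X22 := hX22
      rw [Matrix.IsHermitian, conjTranspose_eq_transpose_of_trivial, hM,
        fromBlocks_transpose, fromBlocks_inj]
      refine ⟨?_, ?_, ?_, ?_⟩ <;>
        simp only [transpose_add, transpose_neg, transpose_mul, transpose_transpose,
          hP', hX11', hX22'] <;>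
        (try simp only [Matrix.mul_assoc]) <;> (try abel)
    · intro z
      have hz : Sum.elim (z ∘ Sum.inl) (z ∘ Sum.inr) = z := Sum.elim_comp_inl_inr z
      have h0 := key (z ∘ Sum.inl) (z ∘ Sum.inr)
      rw [hz] at h0
      rw [show star z = z from star_trivial _]
      rw [h0]
      have := h (z ∘ Sum.inl) (z ∘ Sum.inr)
      linarith
end
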